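/- Let k ≥ 2 and 1 ≤ r ≤ k-1 be integers, let N, β₁, γ, α, λ > 0 be reals, let I₁ > 0, and let S₀, S₁, …, S_k, V be real numbers satisfying: 0 = -(β₁/N)S₀I₁ + kα·S₁ - λS₀ + αV; kα·S_{i+1} = (kα + λ)·S_i for 1 ≤ i ≤ r; S_{i+1} = S_i for r+1 ≤ i ≤ k-1; γI₁ = kα·S_k; (β₁/N)·S₀ = γ; λ·Σ_{i=0}^{r} S_i = αV; and Σ_{i=0}^{k} S_i + V + I₁ = N. Then I₁ = (Nkλ/β₁)·(β₁α - (α + λ)γ)(kα + λ)^r / [(kαλ + (k-r)λγ + k(α + λ)γ)(kα + λ)^r - k(α + λ)γ(kα)^r]. -/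

import Mathlib

/-- Strain 1-only endemic steady state of the separated immunity model: value of `I₁`. -/
theorem separated_strain1_I1
    (k r : ℕ) (hk : 2 ≤ k) (hr1 : 1 ≤ r) (hrk : r ≤ k - 1)
    (N β₁ γ α lam : ℝ) (hN : 0 < N) (hβ₁ : 0 < β₁) (hγ : 0 < γ) (hα : 0 < α) (hlam : 0 < lam)
    (I₁ : ℝ) (hI₁ : 0 < I₁)
    (S : ℕ → ℝ) (V : ℝ)
    (h1 : 0 = -(β₁ / N) * S 0 * I₁ + (k : ℝ) * α * S 1 - lam * S 0 + α * V)
    (h2 : ∀ i : ℕ, 1 ≤ i → i ≤ r → (k : ℝ) * α * S (i + 1) = ((k : ℝ) * α + lam) * S i)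
    (h3 : ∀ i : ℕ, r + 1 ≤ i → i ≤ k - 1 → S (i + 1) = S i)
    (h4 : γ * I₁ = (k : ℝ) * α * S k)
    (h5 : (β₁ / N) * S 0 = γ)
    (h6 : lam * ∑ i ∈ Finset.range (r + 1), S i = α * V)
    (h7 : ∑ i ∈ Finset.range (k + 1), S i + V + I₁ = N) :
    I₁ = N * (k : ℝ) * lam / β₁ *
      ((β₁ * α - (α + lam) * γ) * ((k : ℝ) * α + lam) ^ r) /
      (((k : ℝ) * α * lam + ((k : ℝ) - (r : ℝ)) * lam * γ + (k : ℝ) * (α + lam) * γ) *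
          ((k : ℝ) * α + lam) ^ r -
        (k : ℝ) * (α + lam) * γ * ((k : ℝ) * α) ^ r) := by
  set c : ℝ := (k : ℝ) * α with hc
  have hrk' : r + 1 ≤ k := by omega
  -- S 0 from h5
  have hS0 : β₁ * S 0 = γ * N := by
    field_simp at h5; linarith
  -- geometric recursion up to r
  have hgeo : ∀ i : ℕ, i ≤ r → c ^ i * S (i + 1) = (c + lam) ^ i * S 1 := by
    intro i
    induction i with
    | zero => intro _; simp
    | succ n ih =>
      intro hi
      have hn := ih (by omega)
      have h2' := h2 (n + 1) (by omega) hi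
      have : c ^ (n + 1) * S (n + 1 + 1) = c ^ n * (c * S (n + 1 + 1)) := by ring
      rw [this, h2']
      calc c ^ n * ((c + lam) * S (n + 1)) = (c + lam) * (c ^ n * S (n + 1)) := by ring
        _ = (c + lam) * ((c + lam) ^ n * S 1) := by rw [hn]
        _ = (c + lam) ^ (n + 1) * S 1 := by ring
  -- S constant from r+1 to k
  have hconst : ∀ i : ℕ, r + 1 ≤ i → i ≤ k → S i = S (r + 1) := by
    intro i
    induction i with
    | zero => intro h _; omega
    | succ n ih =>
      intro h1i h2i
      rcases Nat.eq_or_lt_of_le h1i with he | hl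
      · rw [← he]
      · have hn : r + 1 ≤ n := by omega
        have := h3 n hn (by omega)
        rw [this]
        exact ih hn (by omega)
  -- S k = S (r+1)
  have hSr : c * S (r + 1) = γ * I₁ := by
    have := hconst k hrk' le_rfl
    rw [← this]; linarith
  -- geometric relation at r, combined
  have hgeoR := hgeo r le_rfl
  have hS1 : (c + lam) ^ r * (c * S 1) = c ^ r * (γ * I₁) := by
    linear_combination (-c) * hgeoR + c ^ r * hSr
  -- telescoping sum
  have hT : lam * ∑ i ∈ Finset.range r, S (i + 1) = c * (S (r + 1) - S 1) := by
    have hterm : ∀ i ∈ Finset.range r,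
        lam * S (i + 1) = c * S (i + 1 + 1) - c * S (i + 1) := by
      intro i hi
      have hi' : i < r := Finset.mem_range.mp hi
      have := h2 (i + 1) (by omega) (by omega)
      linarith
    calc lam * ∑ i ∈ Finset.range r, S (i + 1)
        = ∑ i ∈ Finset.range r, (lam * S (i + 1)) := by rw [Finset.mul_sum]
      _ = ∑ i ∈ Finset.range r, ((fun j => c * S (j + 1)) (i + 1) - (fun j => c * S (j + 1)) i) :=
          Finset.sum_congr rfl hterm
      _ = (fun j => c * S (j + 1)) r - (fun j => c * S (j + 1)) 0 :=
          Finset.sum_range_sub (fun j => c * S (j + 1)) r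
      _ = c * (S (r + 1) - S 1) := by ring
  -- split of the sum up to r
  have hsplit6 : ∑ i ∈ Finset.range (r + 1), S i
      = S 0 + ∑ i ∈ Finset.range r, S (i + 1) := by
    rw [Finset.sum_range_succ' S r]; ring
  -- V equation
  have hV : α * V = lam * (S 0 + ∑ i ∈ Finset.range r, S (i + 1)) := by
    rw [hsplit6] at h6; linarith
  -- split of the full sum
  have hsplit7 : ∑ i ∈ Finset.range (k + 1), S i
      = S 0 + ∑ i ∈ Finset.range r, S (i + 1) + ((k : ℝ) - (r : ℝ)) * S (r + 1) := by
    have hle : r + 1 ≤ k + 1 := by omega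
    have h0 : ∑ i ∈ Finset.range (k + 1), S i
        = ∑ i ∈ Finset.range (r + 1), S i + ∑ i ∈ Finset.Ico (r + 1) (k + 1), S i := by
      rw [Finset.range_eq_Ico, Finset.range_eq_Ico]
      exact (Finset.sum_Ico_consecutive S (Nat.zero_le _) hle).symm
    have h1' : ∑ i ∈ Finset.Ico (r + 1) (k + 1), S i
        = ∑ _i ∈ Finset.Ico (r + 1) (k + 1), S (r + 1) := by
      apply Finset.sum_congr rfl
      intro i hi
      rw [Finset.mem_Ico] at hi
      exact hconst i hi.1 (by omega)
    have h2' : ∑ _i ∈ Finset.Ico (r + 1) (k + 1), S (r + 1)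
        = ((k - r : ℕ) : ℝ) * S (r + 1) := by
      have he : k + 1 - (r + 1) = k - r := by omega
      rw [Finset.sum_const, Nat.card_Ico, nsmul_eq_mul, he]
    have hcast : ((k - r : ℕ) : ℝ) = (k : ℝ) - (r : ℝ) := by
      rw [Nat.cast_sub (by omega)]
    rw [h0, hsplit6, h1', h2', hcast]
  -- total population
  have htot : S 0 + ∑ i ∈ Finset.range r, S (i + 1) + ((k : ℝ) - (r : ℝ)) * S (r + 1)
      + V + I₁ = N := by
    rw [← hsplit7]; linarith
  -- key identity
  set Q : ℝ := (c + lam) ^ r with hQ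
  set P : ℝ := c ^ r with hP
  have key : N * (k : ℝ) * lam * (β₁ * α - (α + lam) * γ) * Q
      = β₁ * I₁ * (((k : ℝ) * α * lam + ((k : ℝ) - (r : ℝ)) * lam * γ
        + (k : ℝ) * (α + lam) * γ) * Q - (k : ℝ) * (α + lam) * γ * P) := by
    linear_combination (-(( k : ℝ) * α * lam * β₁ * Q)) * htot
      + ((k : ℝ) * lam * β₁ * Q) * hV
      + ((k : ℝ) * β₁ * Q * (α + lam)) * hT
      + ((k : ℝ) * lam * Q * (α + lam)) * hS0
      + (-((k : ℝ) * β₁ * (α + lam))) * hS1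
      + ((k : ℝ) * β₁ * (α + lam) * Q + lam * β₁ * Q * ((k : ℝ) - (r : ℝ))) * hSr
  -- denominator positive
  have hk2 : (2 : ℝ) ≤ (k : ℝ) := by exact_mod_cast hk
  have hkr : (r : ℝ) + 1 ≤ (k : ℝ) := by exact_mod_cast hrk'
  have hcpos : 0 < c := by positivity
  have hPQ : P < Q := by
    apply pow_lt_pow_left₀ (by linarith) (le_of_lt hcpos)
    omega
  have hPpos : 0 < P := by positivity
  have hD : 0 < ((k : ℝ) * α * lam + ((k : ℝ) - (r : ℝ)) * lam * γ
      + (k : ℝ) * (α + lam) * γ) * Q - (k : ℝ) * (α + lam) * γ * P := by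
    have hkpos : (0 : ℝ) < (k : ℝ) := by linarith
    have h1' : 0 < (k : ℝ) * (α + lam) * γ * (Q - P) := by
      apply mul_pos _ (by linarith)
      positivity
    have h2' : 0 < ((k : ℝ) * α * lam + ((k : ℝ) - (r : ℝ)) * lam * γ) * Q := by
      apply mul_pos _ (by linarith [hPpos])
      have : 0 < ((k : ℝ) - (r : ℝ)) := by linarith
      positivity
    nlinarith
  rw [eq_div_iff hD.ne']
  field_simp
  linear_combination -key
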